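/- Let F ⊆ ℝ^d be the attractor of an autonomous iterated function system of contracting similarities {f_i}_{i∈I} with I finite, i.e. the unique nonempty compact set F with F = ⋃_{i∈I} f_i(F). If the system satisfies the Moran open-set condition — there exists a nonempty bounded open set U with F ⊆ closure(U), f_i(U) ⊆ U for all i ∈ I, and f_i(U) ∩ f_j(U) = ∅ for i ≠ j — then F is equi-homogeneous. -/

import Mathlib

open Set Metric Filter Bornology MeasureTheory
open scoped ENNReal NNReal

/-- `coverNumber F δ` : the minimum number of closed `δ`-balls with centres in
`F` needed to cover `F` (`∞` if there is no finite such cover). -/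
noncomputable def coverNumber {X : Type*} [MetricSpace X] (F : Set X) (δ : ℝ) : ℝ≥0∞ :=
  ⨅ (t : Finset X) (_ : (t : Set X) ⊆ F) (_ : F ⊆ ⋃ x ∈ t, closedBall x δ),
    (t.card : ℝ≥0∞)

namespace SelfSimAux
variable {X : Type*} [MetricSpace X] {F : Set X} {r : ℝ}

lemma coverNumber_le_card {t : Finset X} (h1 : (t : Set X) ⊆ F)
    (h2 : F ⊆ ⋃ x ∈ t, closedBall x r) : coverNumber F r ≤ t.card := by
  refine iInf_le_of_le t ?_
  exact iInf_le_of_le h1 (iInf_le _ h2)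

lemma le_coverNumber {n : ℝ≥0∞}
    (h : ∀ t : Finset X, (t : Set X) ⊆ F → F ⊆ ⋃ x ∈ t, closedBall x r → n ≤ t.card) :
    n ≤ coverNumber F r :=
  le_iInf fun t => le_iInf fun h1 => le_iInf fun h2 => h t h1 h2

lemma exists_cover (hF : IsCompact F) (hr : 0 < r) :
    ∃ t : Finset X, (t : Set X) ⊆ F ∧ F ⊆ ⋃ x ∈ t, closedBall x r := by
  obtain ⟨s, hsF, hfin, hcov⟩ := finite_approx_of_totallyBounded hF.totallyBounded r hr
  refine ⟨hfin.toFinset, by simpa using hsF, ?_⟩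
  intro x hx
  obtain ⟨y, hy, hxy⟩ := mem_iUnion₂.1 (hcov hx)
  exact mem_iUnion₂.2 ⟨y, by simpa using hy, ball_subset_closedBall hxy⟩

lemma exists_optimal_cover (hF : IsCompact F) (hr : 0 < r) :
    ∃ t : Finset X, (t : Set X) ⊆ F ∧ (F ⊆ ⋃ x ∈ t, closedBall x r) ∧
      (t.card : ℝ≥0∞) = coverNumber F r := by
  have hne : ∃ n : ℕ, ∃ t : Finset X, (t : Set X) ⊆ F ∧
      (F ⊆ ⋃ x ∈ t, closedBall x r) ∧ t.card = n := by
    obtain ⟨t, h1, h2⟩ := exists_cover hF hr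
    exact ⟨t.card, t, h1, h2, rfl⟩
  obtain ⟨t, h1, h2, hcard⟩ := Nat.sInf_mem hne
  refine ⟨t, h1, h2, le_antisymm ?_ (coverNumber_le_card h1 h2)⟩
  refine le_coverNumber fun s hs1 hs2 => ?_
  have h3 : t.card ≤ s.card := hcard ▸ Nat.sInf_le ⟨s, hs1, hs2, rfl⟩
  exact_mod_cast h3

section Words
variable {ι : Type*} {α : Type*}

def comp (f : ι → α → α) : List ι → α → α := fun w => w.foldr (fun i g => f i ∘ g) id

@[simp] lemma comp_nil (f : ι → α → α) : comp f [] = id := rfl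
@[simp] lemma comp_cons (f : ι → α → α) (i : ι) (w : List ι) :
    comp f (i :: w) = f i ∘ comp f w := rfl

def rat (σ : ι → ℝ) (w : List ι) : ℝ := (w.map σ).prod

@[simp] lemma rat_nil (σ : ι → ℝ) : rat σ [] = 1 := by simp [rat]
@[simp] lemma rat_cons (σ : ι → ℝ) (i : ι) (w : List ι) :
    rat σ (i :: w) = σ i * rat σ w := by simp [rat]
lemma rat_append (σ : ι → ℝ) (u v : List ι) : rat σ (u ++ v) = rat σ u * rat σ v := by
  simp [rat]

variable {σ : ι → ℝ}

lemma rat_pos (hσ : ∀ i, 0 < σ i) (w : List ι) : 0 < rat σ w := by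
  induction w with
  | nil => simp
  | cons i w ih => simpa using mul_pos (hσ i) ih

lemma rat_le_one (hσ : ∀ i, 0 < σ i) (hσ1 : ∀ i, σ i ≤ 1) (w : List ι) : rat σ w ≤ 1 := by
  induction w with
  | nil => simp
  | cons i w ih =>
      simp only [rat_cons]
      calc σ i * rat σ w ≤ 1 * 1 := by
            apply mul_le_mul (hσ1 i) ih (rat_pos hσ w).le zero_le_one
        _ = 1 := by ring

lemma rat_le_of_prefix (hσ : ∀ i, 0 < σ i) (hσ1 : ∀ i, σ i ≤ 1) {u w : List ι}
    (h : u <+: w) : rat σ w ≤ rat σ u := by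
  obtain ⟨v, rfl⟩ := h
  rw [rat_append]
  calc rat σ u * rat σ v ≤ rat σ u * 1 :=
        mul_le_mul_of_nonneg_left (rat_le_one hσ hσ1 v) (rat_pos hσ u).le
    _ = rat σ u := mul_one _

/-- The stopping-time word set at scale `t`. -/
def Lam (σ : ι → ℝ) (t : ℝ) : Set (List ι) :=
  {w | rat σ w ≤ t ∧ (w ≠ [] → t < rat σ w.dropLast)}

lemma rat_gt_of_mem_Lam (hσ : ∀ i, 0 < σ i) {c t : ℝ} (hc : ∀ i, c ≤ σ i) (hc0 : 0 < c)
    (hc1 : c < 1) (ht : 0 < t) (ht1 : t ≤ 1) {w : List ι} (hw : w ∈ Lam σ t) :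
    c * t < rat σ w := by
  rcases eq_or_ne w [] with rfl | hne
  · have : c * t < 1 * 1 := by
      nlinarith
    simpa using this
  · have hdec := List.dropLast_append_getLast hne
    have h1 : rat σ w = rat σ w.dropLast * σ (w.getLast hne) := by
      conv_lhs => rw [← hdec]
      rw [rat_append]; simp
    have h2 : t < rat σ w.dropLast := hw.2 hne
    calc c * t < c * rat σ w.dropLast := by
          exact mul_lt_mul_of_pos_left h2 hc0
      _ = rat σ w.dropLast * c := mul_comm _ _
      _ ≤ rat σ w.dropLast * σ (w.getLast hne) :=
          mul_le_mul_of_nonneg_left (hc _) (le_of_lt (lt_trans ht h2))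
      _ = rat σ w := h1.symm

lemma not_prefix_of_mem_Lam (hσ : ∀ i, 0 < σ i) (hσ1 : ∀ i, σ i ≤ 1) {t : ℝ}
    {w w' : List ι} (hw : w ∈ Lam σ t) (hw' : w' ∈ Lam σ t) (hne : w ≠ w') :
    ¬ w <+: w' := by
  intro hpre
  have hlt : w.length < w'.length := by
    rcases lt_or_eq_of_le hpre.length_le with h | h
    · exact h
    · exact absurd (List.IsPrefix.eq_of_length hpre h) hne
  have hw'ne : w' ≠ [] := by
    rintro rfl; simp at hlt
  have hpre2 : w <+: w'.dropLast := by
    apply List.prefix_of_prefix_length_le hpre (List.dropLast_prefix w')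
    rw [List.length_dropLast]
    omega
  have := rat_le_of_prefix hσ hσ1 hpre2
  have := hw'.2 hw'ne
  have := hw.1
  linarith

end Words
section MetricWords
variable {ι : Type*} {X : Type*} [MetricSpace X] {f : ι → X → X} {σ : ι → ℝ}

lemma dist_comp (hsim : ∀ i x y, dist (f i x) (f i y) = σ i * dist x y) :
    ∀ (w : List ι) (x y : X), dist (comp f w x) (comp f w y) = rat σ w * dist x y := by
  intro w
  induction w with
  | nil => simp
  | cons i w ih =>
      intro x y
      simp only [comp_cons, Function.comp_apply, rat_cons]
      rw [hsim, ih, mul_assoc]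

lemma comp_injective (hσ : ∀ i, 0 < σ i)
    (hsim : ∀ i x y, dist (f i x) (f i y) = σ i * dist x y) (w : List ι) :
    Function.Injective (comp f w) := by
  intro a b hab
  have h := dist_comp hsim w a b
  rw [hab, dist_self] at h
  have := (rat_pos hσ w)
  have : dist a b = 0 := by
    rcases (mul_eq_zero.1 h.symm) with h' | h'
    · exact absurd h' this.ne'
    · exact h'
  exact dist_eq_zero.1 this

lemma comp_image_subset {A : Set X} (h : ∀ i, f i '' A ⊆ A) :
    ∀ w : List ι, comp f w '' A ⊆ A := by
  intro w
  induction w with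
  | nil => simp
  | cons i w ih =>
      rw [comp_cons, Set.image_comp]
      exact (Set.image_mono (f := f i) ih).trans (h i)

lemma comp_image_disjoint {U : Set X} (hinj : ∀ i, Function.Injective (f i))
    (hfU : ∀ i, f i '' U ⊆ U) (hdisj : ∀ i j, i ≠ j → f i '' U ∩ f j '' U = ∅) :
    ∀ w w' : List ι, ¬ w <+: w' → ¬ w' <+: w →
      comp f w '' U ∩ comp f w' '' U = ∅ := by
  intro w
  induction w with
  | nil => intro w' h1 _; exact absurd List.nil_prefix h1
  | cons i u ih =>
      intro w' h1 h2
      cases w' with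
      | nil => exact absurd List.nil_prefix h2
      | cons j v =>
          by_cases hij : i = j
          · subst hij
            have hu : ¬ u <+: v := fun h => h1 (List.cons_prefix_cons.2 ⟨rfl, h⟩)
            have hv : ¬ v <+: u := fun h => h2 (List.cons_prefix_cons.2 ⟨rfl, h⟩)
            rw [comp_cons, comp_cons, Set.image_comp, Set.image_comp,
              ← Set.image_inter (hinj i), ih v hu hv, Set.image_empty]
          · apply Set.eq_empty_of_subset_empty
            rw [← hdisj i j hij]
            apply Set.inter_subset_inter
            · rw [comp_cons, Set.image_comp]
              exact Set.image_mono (f := f i) (comp_image_subset hfU u)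
            · rw [comp_cons, Set.image_comp]
              exact Set.image_mono (f := f j) (comp_image_subset hfU v)

lemma Lam_covers (hσ : ∀ i, 0 < σ i) {σmax : ℝ} (hmax : ∀ i, σ i ≤ σmax) [Nonempty ι]
    {F : Set X} (hFinv : F = ⋃ i, f i '' F) :
    ∀ (n : ℕ) (t : ℝ), 0 < t → σmax ^ n ≤ t → ∀ x ∈ F, ∃ w ∈ Lam σ t, x ∈ comp f w '' F := by
  have hmax0 : 0 ≤ σmax := le_trans (hσ (Classical.arbitrary ι)).le (hmax _)
  intro n
  induction n with
  | zero =>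
      intro t ht hn x hx
      exact ⟨[], ⟨by simpa using hn, fun h => absurd rfl h⟩, by simpa using hx⟩
  | succ n ih =>
      intro t ht hn x hx
      by_cases h1 : 1 ≤ t
      · exact ⟨[], ⟨by simpa using h1, fun h => absurd rfl h⟩, by simpa using hx⟩
      · push_neg at h1
        have hx' : x ∈ ⋃ i, f i '' F := hFinv ▸ hx
        obtain ⟨i, x₁, hx₁, rfl⟩ : ∃ i x₁, x₁ ∈ F ∧ f i x₁ = x := by
          obtain ⟨s, ⟨i, rfl⟩, hxs⟩ := hx'
          obtain ⟨x₁, hx₁, hfx⟩ := hxs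
          exact ⟨i, x₁, hx₁, hfx⟩
        have hσi := hσ i
        have h2 : σmax ^ n ≤ t / σ i := by
          rw [le_div_iff₀ hσi]
          calc σmax ^ n * σ i ≤ σmax ^ n * σmax :=
                mul_le_mul_of_nonneg_left (hmax i) (pow_nonneg hmax0 n)
            _ = σmax ^ (n + 1) := (pow_succ σmax n).symm
            _ ≤ t := hn
        obtain ⟨w', hw', hmem⟩ := ih (t / σ i) (div_pos ht hσi) h2 x₁ hx₁
        obtain ⟨q, hq, hqe⟩ := hmem
        refine ⟨i :: w', ⟨?_, ?_⟩, ⟨q, hq, by simp [hqe]⟩⟩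
        · have h4 := mul_le_mul_of_nonneg_left hw'.1 hσi.le
          rw [mul_div_cancel₀ t hσi.ne'] at h4
          rwa [rat_cons]
        · intro _
          cases w' with
          | nil => simpa using h1
          | cons j v =>
              have hd : (i :: j :: v).dropLast = i :: (j :: v).dropLast := rfl
              rw [hd, rat_cons]
              have h3 : t / σ i < rat σ (j :: v).dropLast := hw'.2 (by simp)
              rw [div_lt_iff₀ hσi] at h3
              calc t < rat σ (j :: v).dropLast * σ i := h3
                _ = σ i * rat σ (j :: v).dropLast := mul_comm _ _

end MetricWords
section Similarity
variable {E : Type*} [NormedAddCommGroup E] [InnerProductSpace ℝ E] [FiniteDimensional ℝ E]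

lemma similarity_surjective {g : E → E} {c : ℝ} (hc : 0 < c)
    (hg : ∀ x y, dist (g x) (g y) = c * dist x y) : Function.Surjective g := by
  classical
  set h : E → E := fun x => c⁻¹ • (g x - g 0) with hh
  have hdist : ∀ x y, dist (h x) (h y) = dist x y := by
    intro x y
    simp only [hh, dist_eq_norm]
    rw [← smul_sub, norm_smul]
    have e : g x - g 0 - (g y - g 0) = g x - g y := by abel
    rw [e, show ‖g x - g y‖ = dist (g x) (g y) from (dist_eq_norm _ _).symm, hg,
      dist_eq_norm]
    rw [Real.norm_eq_abs, abs_of_pos (inv_pos.2 hc)]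
    field_simp
  have h0 : h 0 = 0 := by simp [hh]
  have hnorm : ∀ x, ‖h x‖ = ‖x‖ := by
    intro x
    have := hdist x 0
    rwa [h0, dist_zero_right, dist_zero_right] at this
  have hinner : ∀ x y, (inner ℝ (h x) (h y) : ℝ) = inner ℝ x y := by
    intro x y
    have e1 : ‖h x - h y‖ = ‖x - y‖ := by
      have := hdist x y; rwa [dist_eq_norm, dist_eq_norm] at this
    have n1 := norm_sub_sq_real (h x) (h y)
    have n2 := norm_sub_sq_real x y
    rw [e1, hnorm, hnorm] at n1
    linarith
  set b := stdOrthonormalBasis ℝ E with hb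
  set v : Fin (Module.finrank ℝ E) → E := fun i => h (b i) with hv
  have hon : Orthonormal ℝ v := by
    rw [orthonormal_iff_ite]
    intro i j
    rw [hv]
    simp only []
    rw [hinner]
    exact orthonormal_iff_ite.1 b.orthonormal i j
  have hcard : Fintype.card (Fin (Module.finrank ℝ E)) = Module.finrank ℝ E := by simp
  have hspan : ⊤ ≤ Submodule.span ℝ (Set.range v) :=
    (hon.linearIndependent.span_eq_top_of_card_eq_finrank' hcard).ge
  set B : OrthonormalBasis (Fin (Module.finrank ℝ E)) ℝ E := OrthonormalBasis.mk hon hspan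
    with hB
  have hBv : ∀ i, B i = v i := by
    intro i
    rw [hB, OrthonormalBasis.coe_mk]
  have hsurj_h : Function.Surjective h := by
    intro z
    refine ⟨∑ j, (inner ℝ (v j) z : ℝ) • b j, ?_⟩
    apply B.repr.injective
    ext i
    rw [B.repr_apply_apply, B.repr_apply_apply, hBv, hv]
    simp only []
    rw [hinner]
    rw [inner_sum]
    simp only [real_inner_smul_right]
    rw [Finset.sum_eq_single i]
    · rw [orthonormal_iff_ite.1 b.orthonormal i i]
      simp
    · intro j _ hji
      rw [orthonormal_iff_ite.1 b.orthonormal i j]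
      simp [Ne.symm hji]
    · intro hni
      exact absurd (Finset.mem_univ i) hni
  intro z
  obtain ⟨x, hx⟩ := hsurj_h (c⁻¹ • (z - g 0))
  refine ⟨x, ?_⟩
  have : c • h x = c • (c⁻¹ • (z - g 0)) := by rw [hx]
  rw [hh] at this
  simp only [smul_smul, mul_inv_cancel₀ hc.ne', one_smul] at this
  have : g x - g 0 = z - g 0 := this
  have := congrArg (· + g 0) this
  simpa using this

lemma ball_subset_image_ball {g : E → E} {c : ℝ} (hc : 0 < c)
    (hg : ∀ x y, dist (g x) (g y) = c * dist x y) (hsurj : Function.Surjective g)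
    (x : E) (r : ℝ) : ball (g x) (c * r) ⊆ g '' ball x r := by
  intro z hz
  obtain ⟨u, rfl⟩ := hsurj z
  refine ⟨u, ?_, rfl⟩
  rw [mem_ball] at hz ⊢
  rw [hg] at hz
  exact lt_of_mul_lt_mul_left (by linarith) hc.le

end Similarity
end SelfSimAux

open SelfSimAux

/-- `F` is equi-homogeneous: for every `δ₀ > 0` there are `M ≥ 1` and
`c₁, c₂ > 0` with
`sup_{x∈F} N(B_δ(x) ∩ F, ρ) ≤ M inf_{x∈F} N(B_{c₁δ}(x) ∩ F, c₂ρ)`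
for all `0 < ρ < δ ≤ δ₀`. -/
def EquiHomogeneous {X : Type*} [MetricSpace X] (F : Set X) : Prop :=
  ∀ δ₀ : ℝ, 0 < δ₀ → ∃ M c₁ c₂ : ℝ, 1 ≤ M ∧ 0 < c₁ ∧ 0 < c₂ ∧
    ∀ δ ρ : ℝ, 0 < ρ → ρ < δ → δ ≤ δ₀ →
      (⨆ x ∈ F, coverNumber (closedBall x δ ∩ F) ρ) ≤
        ENNReal.ofReal M * (⨅ x ∈ F, coverNumber (closedBall x (c₁ * δ) ∩ F) (c₂ * ρ))

/-- The attractor of an autonomous iterated function system of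
contracting similarities satisfying the Moran open-set condition is
equi-homogeneous. -/
theorem selfSimilar_equiHomogeneous {d : ℕ} {ι : Type*} [Fintype ι] [Nonempty ι]
    (f : ι → EuclideanSpace ℝ (Fin d) → EuclideanSpace ℝ (Fin d))
    (σ : ι → ℝ) (hσ : ∀ i, 0 < σ i ∧ σ i < 1)
    (hsim : ∀ i x y, dist (f i x) (f i y) = σ i * dist x y)
    (F : Set (EuclideanSpace ℝ (Fin d)))
    (hFc : IsCompact F) (hFne : F.Nonempty)
    (hFinv : F = ⋃ i, f i '' F)
    (U : Set (EuclideanSpace ℝ (Fin d)))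
    (hUne : U.Nonempty) (hUo : IsOpen U) (hUb : IsBounded U)
    (hFU : F ⊆ closure U)
    (hfU : ∀ i, f i '' U ⊆ U)
    (hdisj : ∀ i j, i ≠ j → f i '' U ∩ f j '' U = ∅) :
    EquiHomogeneous F := by
  classical
  intro δ₀ hδ₀
  have hσpos : ∀ i, 0 < σ i := fun i => (hσ i).1
  have hσlt : ∀ i, σ i < 1 := fun i => (hσ i).2
  have hσle : ∀ i, σ i ≤ 1 := fun i => (hσ i).2.le
  have hinj : ∀ i, Function.Injective (f i) := by
    intro i a b hab
    have h := hsim i a b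
    rw [hab, dist_self] at h
    have h2 : dist a b = 0 := by
      rcases mul_eq_zero.1 h.symm with h' | h'
      · exact absurd h' (hσpos i).ne'
      · exact h'
    exact dist_eq_zero.1 h2
  have hsurj : ∀ i, Function.Surjective (f i) := fun i =>
    similarity_surjective (hσpos i) (hsim i)
  have hcompdist := dist_comp (f := f) (σ := σ) hsim
  have hcompsurj : ∀ w : List ι, Function.Surjective (comp f w) := by
    intro w
    induction w with
    | nil => exact Function.surjective_id
    | cons i w ih => rw [comp_cons]; exact (hsurj i).comp ih
  have hfF : ∀ i, f i '' F ⊆ F := by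
    intro i
    conv_rhs => rw [hFinv]
    exact subset_iUnion (fun j => f j '' F) i
  obtain ⟨i₀⟩ := ‹Nonempty ι›
  set σmin : ℝ := Finset.univ.inf' Finset.univ_nonempty σ with hσminDef
  set σmax : ℝ := Finset.univ.sup' Finset.univ_nonempty σ with hσmaxDef
  have hminle : ∀ i, σmin ≤ σ i := fun i => Finset.inf'_le _ (Finset.mem_univ i)
  have hlemax : ∀ i, σ i ≤ σmax := fun i => Finset.le_sup' _ (Finset.mem_univ i)
  have hminpos : 0 < σmin := by
    obtain ⟨j, _, hj⟩ := Finset.exists_mem_eq_inf' Finset.univ_nonempty σ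
    rw [hσminDef, hj]; exact hσpos j
  have hminlt1 : σmin < 1 := lt_of_le_of_lt (hminle i₀) (hσlt i₀)
  have hmaxlt1 : σmax < 1 := by
    obtain ⟨j, _, hj⟩ := Finset.exists_mem_eq_sup' Finset.univ_nonempty σ
    rw [hσmaxDef, hj]; exact hσlt j
  obtain ⟨p, hp⟩ := hUne
  obtain ⟨r₀, hr₀, hballU⟩ := Metric.isOpen_iff.1 hUo p hp
  set DU : ℝ := Metric.diam U with hDU
  have hDU0 : 0 ≤ DU := Metric.diam_nonneg
  set R : ℝ := DU + 1 with hRdef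
  have hR : 0 < R := by positivity
  set DF : ℝ := Metric.diam F with hDF
  have hDF0 : 0 ≤ DF := Metric.diam_nonneg
  set c₁ : ℝ := DF + 1 with hc₁def
  have hc₁ : 0 < c₁ := by positivity
  set mx : ℝ := max 1 δ₀ with hmxdef
  have hmx1 : 1 ≤ mx := le_max_left _ _
  have hmxδ₀ : δ₀ ≤ mx := le_max_right _ _
  have hmx0 : 0 < mx := lt_of_lt_of_le one_pos hmx1
  set M₀ : ℝ := R * mx / (σmin * r₀) with hM₀def
  have hM₀ : 0 < M₀ := by positivity
  set M : ℝ := M₀ ^ d + 1 with hMdef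
  have hM1 : 1 ≤ M := le_add_of_nonneg_left (pow_nonneg hM₀.le d)
  set c₂ : ℝ := σmin / (4 * mx) with hc₂def
  have hc₂ : 0 < c₂ := by positivity
  refine ⟨M, c₁, c₂, hM1, hc₁, hc₂, ?_⟩
  intro δ ρ hρ hρδ hδδ₀
  have hδ : 0 < δ := hρ.trans hρδ
  set t : ℝ := min δ 1 with htdef
  have ht : 0 < t := lt_min hδ one_pos
  have ht1 : t ≤ 1 := min_le_right _ _
  have htδ : t ≤ δ := min_le_left _ _
  have hδt : δ ≤ mx * t := by
    rcases le_total δ 1 with h | h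
    · rw [htdef, min_eq_left h]
      calc δ = 1 * δ := (one_mul δ).symm
        _ ≤ mx * δ := mul_le_mul_of_nonneg_right hmx1 hδ.le
    · rw [htdef, min_eq_right h]; rw [mul_one]; exact hδδ₀.trans hmxδ₀
  set ρ' : ℝ := ρ / (2 * δ) with hρ'def
  have hρ' : 0 < ρ' := by positivity
  obtain ⟨t₀, ht₀F, ht₀cov, ht₀card⟩ := exists_optimal_cover hFc hρ'
  set N : ℝ≥0∞ := coverNumber F ρ' with hNdef
  obtain ⟨n, hn⟩ := exists_pow_lt_of_lt_one ht hmaxlt1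
  -- volume of closed balls
  set c0 : ℝ≥0∞ := volume (closedBall (0 : EuclideanSpace ℝ (Fin d)) 1) with hc0def
  have hc0pos : c0 ≠ 0 := (measure_closedBall_pos volume 0 one_pos).ne'
  have hc0top : c0 ≠ ⊤ := measure_closedBall_lt_top.ne
  have hvol : ∀ (x : EuclideanSpace ℝ (Fin d)) (r : ℝ), 0 ≤ r →
      volume (closedBall x r) = ENNReal.ofReal (r ^ d) * c0 := by
    intro x r hr
    rw [hc0def, MeasureTheory.Measure.addHaar_closedBall' volume x hr,
      finrank_euclideanSpace_fin]
  -- measurability / openness of the pieces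
  have hmes : ∀ w : List ι, MeasurableSet (comp f w '' U) := by
    intro w
    apply IsOpen.measurableSet
    rw [Metric.isOpen_iff]
    rintro _ ⟨z, hz, rfl⟩
    obtain ⟨ε, hε, hball'⟩ := Metric.isOpen_iff.1 hUo z hz
    refine ⟨rat σ w * ε, by have := rat_pos hσpos w; positivity, ?_⟩
    refine (ball_subset_image_ball (rat_pos hσpos w) (hcompdist w) (hcompsurj w) z ε).trans ?_
    exact Set.image_mono hball'
  -- LOWER BOUND
  have hlow : ∀ x ∈ F, N ≤ coverNumber (closedBall x (c₁ * δ) ∩ F) (c₂ * ρ) := by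
    intro x hx
    obtain ⟨w, hwΛ, u, huF, hux⟩ := Lam_covers hσpos hlemax hFinv n t ht hn.le x hx
    have hratle : rat σ w ≤ t := hwΛ.1
    have hratpos : 0 < rat σ w := rat_pos hσpos w
    have hratgt : σmin * t < rat σ w :=
      rat_gt_of_mem_Lam hσpos hminle hminpos hminlt1 ht ht1 hwΛ
    have hsub : comp f w '' F ⊆ closedBall x (c₁ * δ) ∩ F := by
      rintro _ ⟨q, hq, rfl⟩
      refine ⟨?_, comp_image_subset hfF w ⟨q, hq, rfl⟩⟩
      rw [mem_closedBall, ← hux]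
      calc dist (comp f w q) (comp f w u) = rat σ w * dist q u := hcompdist w q u
        _ ≤ δ * DF := by
            apply mul_le_mul (hratle.trans htδ)
              (Metric.dist_le_diam_of_mem hFc.isBounded hq huF) dist_nonneg hδ.le
        _ = DF * δ := mul_comm _ _
        _ ≤ DF * δ + δ := le_add_of_nonneg_right hδ.le
        _ = c₁ * δ := by rw [hc₁def]; ring
    refine le_coverNumber fun s hs1 hs2 => ?_
    set pickF : EuclideanSpace ℝ (Fin d) → EuclideanSpace ℝ (Fin d) :=
      fun z => if h : ∃ q ∈ F, dist (comp f w q) z ≤ c₂ * ρ then h.choose else u with hpickF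
    have hpickF_mem : ∀ z, pickF z ∈ F := by
      intro z
      rw [hpickF]
      dsimp only
      split_ifs with h
      · exact h.choose_spec.1
      · exact huF
    have hpickF_dist : ∀ z, (∃ q ∈ F, dist (comp f w q) z ≤ c₂ * ρ) →
        dist (comp f w (pickF z)) z ≤ c₂ * ρ := by
      intro z h
      rw [hpickF]
      dsimp only
      rw [dif_pos h]
      exact h.choose_spec.2
    have key : 2 * (c₂ * ρ) ≤ ρ' * rat σ w := by
      have k1 : σmin * δ ≤ mx * rat σ w := by
        calc σmin * δ ≤ σmin * (mx * t) := mul_le_mul_of_nonneg_left hδt hminpos.le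
          _ = mx * (σmin * t) := by ring
          _ ≤ mx * rat σ w := mul_le_mul_of_nonneg_left hratgt.le hmx0.le
      rw [hc₂def, hρ'def,
        show (2:ℝ) * (σmin / (4 * mx) * ρ) = σmin * ρ / (2 * mx) by ring,
        show ρ / (2 * δ) * rat σ w = ρ * rat σ w / (2 * δ) by ring,
        div_le_div_iff₀ (by positivity) (by positivity)]
      have k2 := mul_le_mul_of_nonneg_left k1 (by positivity : (0:ℝ) ≤ 2 * ρ)
      calc σmin * ρ * (2 * δ) = 2 * ρ * (σmin * δ) := by ring
        _ ≤ 2 * ρ * (mx * rat σ w) := k2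
        _ = ρ * rat σ w * (2 * mx) := by ring
    have hcovF : F ⊆ ⋃ z ∈ s.image pickF, closedBall z ρ' := by
      intro a ha
      have hmem : comp f w a ∈ closedBall x (c₁ * δ) ∩ F := hsub ⟨a, ha, rfl⟩
      obtain ⟨z, hzs, hz⟩ := mem_iUnion₂.1 (hs2 hmem)
      have hex : ∃ q ∈ F, dist (comp f w q) z ≤ c₂ * ρ := ⟨a, ha, mem_closedBall.1 hz⟩
      have h1 := hpickF_dist z hex
      have h2 : dist a (pickF z) ≤ ρ' := by
        have hD : rat σ w * dist a (pickF z) ≤ 2 * (c₂ * ρ) := by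
          rw [← hcompdist w a (pickF z)]
          calc dist (comp f w a) (comp f w (pickF z))
              ≤ dist (comp f w a) z + dist z (comp f w (pickF z)) := dist_triangle _ _ _
            _ ≤ c₂ * ρ + c₂ * ρ := by
                apply add_le_add (mem_closedBall.1 hz)
                rw [dist_comm]; exact h1
            _ = 2 * (c₂ * ρ) := by ring
        have hD2 : rat σ w * dist a (pickF z) ≤ rat σ w * ρ' := by
          calc rat σ w * dist a (pickF z) ≤ 2 * (c₂ * ρ) := hD
            _ ≤ ρ' * rat σ w := key
            _ = rat σ w * ρ' := mul_comm _ _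
        exact le_of_mul_le_mul_left hD2 hratpos
      exact mem_iUnion₂.2 ⟨pickF z, Finset.mem_image_of_mem pickF hzs, mem_closedBall.2 h2⟩
    have hsubF : ((s.image pickF : Finset (EuclideanSpace ℝ (Fin d))) :
        Set (EuclideanSpace ℝ (Fin d))) ⊆ F := by
      intro z hz
      rw [Finset.coe_image] at hz
      obtain ⟨z', _, rfl⟩ := hz
      exact hpickF_mem z'
    have h3 : N ≤ (s.image pickF).card := coverNumber_le_card hsubF hcovF
    refine h3.trans ?_
    exact_mod_cast Finset.card_image_le
  -- UPPER BOUND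
  have hup : ∀ y ∈ F, coverNumber (closedBall y δ ∩ F) ρ ≤ ENNReal.ofReal M * N := by
    intro y hy
    set S : Set (List ι) :=
      {w | w ∈ Lam σ t ∧ (comp f w '' F ∩ (closedBall y δ ∩ F)).Nonempty} with hSdef
    have hcount : ∀ T : Finset (List ι), ↑T ⊆ S → (T.card : ℝ≥0∞) ≤ ENNReal.ofReal M := by
      intro T hT
      have hdisjT : (↑T : Set (List ι)).PairwiseDisjoint (fun w => comp f w '' U) := by
        intro w hw w' hw' hne
        have h1 := (hT hw).1
        have h2 := (hT hw').1
        exact Set.disjoint_iff_inter_eq_empty.2 (comp_image_disjoint hinj hfU hdisj w w'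
          (not_prefix_of_mem_Lam hσpos hσle h1 h2 hne)
          (not_prefix_of_mem_Lam hσpos hσle h2 h1 (Ne.symm hne)))
      have hin : ∀ w ∈ T, closedBall (comp f w p) (σmin * t * r₀) ⊆ comp f w '' U := by
        intro w hw
        have hratgt : σmin * t < rat σ w :=
          rat_gt_of_mem_Lam hσpos hminle hminpos hminlt1 ht ht1 (hT hw).1
        refine (closedBall_subset_ball (mul_lt_mul_of_pos_right hratgt hr₀)).trans ?_
        refine (ball_subset_image_ball (rat_pos hσpos w) (hcompdist w)
          (hcompsurj w) p r₀).trans ?_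
        exact Set.image_mono hballU
      have hout : ∀ w ∈ T, comp f w '' U ⊆ closedBall y (R * δ) := by
        intro w hw
        obtain ⟨hwΛ, a, ⟨q', hq', hq'e⟩, ha⟩ := hT hw
        rintro _ ⟨z, hz, rfl⟩
        rw [mem_closedBall]
        have hdzq : dist z q' ≤ DU := by
          rw [hDU, ← Metric.diam_closure]
          exact Metric.dist_le_diam_of_mem hUb.closure (subset_closure hz) (hFU hq')
        have hray : dist a y ≤ δ := mem_closedBall.1 ha.1
        calc dist (comp f w z) y ≤ dist (comp f w z) (comp f w q') + dist (comp f w q') y :=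
              dist_triangle _ _ _
          _ = rat σ w * dist z q' + dist a y := by rw [hcompdist w z q', hq'e]
          _ ≤ δ * DU + δ := by
              apply add_le_add _ hray
              apply mul_le_mul (hwΛ.1.trans htδ) hdzq dist_nonneg hδ.le
          _ = R * δ := by rw [hRdef]; ring
      have hle1 : ∀ w ∈ T, ENNReal.ofReal ((σmin * t * r₀) ^ d) * c0 ≤
          volume (comp f w '' U) := by
        intro w hw
        rw [← hvol (comp f w p) (σmin * t * r₀) (by positivity)]
        exact measure_mono (hin w hw)
      have hcard : (T.card : ℝ≥0∞) * (ENNReal.ofReal ((σmin * t * r₀) ^ d) * c0) ≤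
          ENNReal.ofReal ((R * δ) ^ d) * c0 := by
        calc (T.card : ℝ≥0∞) * (ENNReal.ofReal ((σmin * t * r₀) ^ d) * c0)
            = ∑ _w ∈ T, ENNReal.ofReal ((σmin * t * r₀) ^ d) * c0 := by
              rw [Finset.sum_const, nsmul_eq_mul]
          _ ≤ ∑ w ∈ T, volume (comp f w '' U) := Finset.sum_le_sum hle1
          _ = volume (⋃ w ∈ T, comp f w '' U) :=
              (measure_biUnion_finset hdisjT (fun w _ => hmes w)).symm
          _ ≤ volume (closedBall y (R * δ)) := measure_mono (iUnion₂_subset hout)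
          _ = ENNReal.ofReal ((R * δ) ^ d) * c0 := hvol y (R * δ) (by positivity)
      rw [← mul_assoc] at hcard
      have hcard2 : (T.card : ℝ≥0∞) * ENNReal.ofReal ((σmin * t * r₀) ^ d) ≤
          ENNReal.ofReal ((R * δ) ^ d) :=
        (ENNReal.mul_le_mul_iff_left hc0pos hc0top).1 hcard
      have ha0 : (0:ℝ) < (σmin * t * r₀) ^ d := by positivity
      have hcard3 : (T.card : ℝ≥0∞) ≤
          ENNReal.ofReal ((R * δ) ^ d) / ENNReal.ofReal ((σmin * t * r₀) ^ d) := by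
        rw [ENNReal.le_div_iff_mul_le (Or.inl (ENNReal.ofReal_pos.2 ha0).ne')
          (Or.inl ENNReal.ofReal_ne_top)]
        exact hcard2
      refine hcard3.trans ?_
      rw [← ENNReal.ofReal_div_of_pos ha0, ← div_pow]
      apply ENNReal.ofReal_le_ofReal
      have hbase : R * δ / (σmin * t * r₀) ≤ M₀ := by
        rw [hM₀def, div_le_div_iff₀ (by positivity) (by positivity)]
        have k3 := mul_le_mul_of_nonneg_left hδt (by positivity : (0:ℝ) ≤ R * (σmin * r₀))
        calc R * δ * (σmin * r₀) = R * (σmin * r₀) * δ := by ring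
          _ ≤ R * (σmin * r₀) * (mx * t) := k3
          _ = R * mx * (σmin * t * r₀) := by ring
      calc (R * δ / (σmin * t * r₀)) ^ d ≤ M₀ ^ d :=
            pow_le_pow_left₀ (by positivity) hbase d
        _ ≤ M := by rw [hMdef]; linarith
    have hSfin : S.Finite := by
      by_contra hinf
      obtain ⟨nM, hnM⟩ := exists_nat_gt M
      obtain ⟨T, hTS, hTcard⟩ := Set.Infinite.exists_subset_card_eq hinf nM
      have hle := hcount T hTS
      rw [hTcard] at hle
      have hlt : ENNReal.ofReal M < (nM : ℝ≥0∞) := by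
        rw [← ENNReal.ofReal_natCast]
        exact ENNReal.ofReal_lt_ofReal_iff_of_nonneg (by linarith) |>.2 hnM
      exact absurd hle (not_le.2 hlt)
    have hScard : ((hSfin.toFinset).card : ℝ≥0∞) ≤ ENNReal.ofReal M :=
      hcount hSfin.toFinset (by simp)
    set pick : List ι × EuclideanSpace ℝ (Fin d) → EuclideanSpace ℝ (Fin d) :=
      fun wz => if h : ((closedBall y δ ∩ F) ∩
        closedBall (comp f wz.1 wz.2) (ρ / 2)).Nonempty then h.choose else y with hpickdef
    set Tfin : Finset (EuclideanSpace ℝ (Fin d)) := (hSfin.toFinset ×ˢ t₀).image pick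
      with hTfindef
    have hTsub : (↑Tfin : Set (EuclideanSpace ℝ (Fin d))) ⊆ closedBall y δ ∩ F := by
      intro z hz
      rw [hTfindef, Finset.coe_image] at hz
      obtain ⟨wz, _, rfl⟩ := hz
      rw [hpickdef]
      dsimp only
      split_ifs with h
      · exact h.choose_spec.1
      · exact ⟨mem_closedBall_self hδ.le, hy⟩
    have hTcov : closedBall y δ ∩ F ⊆ ⋃ z ∈ Tfin, closedBall z ρ := by
      intro a ha
      obtain ⟨w, hwΛ, q, hq, hqe⟩ := Lam_covers hσpos hlemax hFinv n t ht hn.le a ha.2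
      have hwS : w ∈ S := ⟨hwΛ, ⟨a, ⟨q, hq, hqe⟩, ha⟩⟩
      obtain ⟨z, hzt₀, hz⟩ := mem_iUnion₂.1 (ht₀cov hq)
      have hdist1 : dist a (comp f w z) ≤ ρ / 2 := by
        rw [← hqe, hcompdist w q z]
        have h4 : rat σ w * dist q z ≤ δ * ρ' := by
          apply mul_le_mul (hwΛ.1.trans htδ) (mem_closedBall.1 hz) dist_nonneg hδ.le
        have h5 : δ * ρ' = ρ / 2 := by
          rw [hρ'def]; field_simp
        rw [← h5]; exact h4
      have hne : ((closedBall y δ ∩ F) ∩ closedBall (comp f w z) (ρ / 2)).Nonempty :=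
        ⟨a, ha, mem_closedBall.2 hdist1⟩
      refine mem_iUnion₂.2 ⟨pick (w, z), ?_, ?_⟩
      · rw [hTfindef]
        exact Finset.mem_image_of_mem pick
          (Finset.mem_product.2 ⟨hSfin.mem_toFinset.2 hwS, hzt₀⟩)
      · rw [mem_closedBall, hpickdef]
        dsimp only
        rw [dif_pos hne]
        have h6 : dist hne.choose (comp f w z) ≤ ρ / 2 :=
          mem_closedBall.1 hne.choose_spec.2
        calc dist a hne.choose ≤ dist a (comp f w z) + dist (comp f w z) hne.choose :=
              dist_triangle _ _ _
          _ ≤ ρ / 2 + ρ / 2 := add_le_add hdist1 (by rw [dist_comm]; exact h6)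
          _ = ρ := by ring
    have h7 := coverNumber_le_card hTsub hTcov
    refine h7.trans ?_
    calc (Tfin.card : ℝ≥0∞) ≤ ((hSfin.toFinset ×ˢ t₀).card : ℝ≥0∞) := by
          exact_mod_cast Finset.card_image_le
      _ = (hSfin.toFinset.card : ℝ≥0∞) * (t₀.card : ℝ≥0∞) := by
          rw [Finset.card_product]; push_cast; ring
      _ ≤ ENNReal.ofReal M * N := by
          exact mul_le_mul' hScard (le_of_eq ht₀card)
  refine iSup₂_le fun y hy => ?_
  exact (hup y hy).trans (mul_le_mul_right (le_iInf₂ fun x hx => hlow x hx) _)
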